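/- arXiv:1401.7234 — 5 statements merged into one kernel-verified Lean document; each statement's English description precedes it below -/
import Mathlib

section
/- The subsets of [0,1] that are finite, contain 0 and 1, and are closed under the Łukasiewicz operations ¬x = 1 - x and x ⇒ y = min(1 - x + y, 1) are exactly the sets Łn = {i/n : 0 ≤ i ≤ n} for integers n ≥ 1. -/
noncomputable def lneg (x : ℝ) : ℝ := 1 - x
noncomputable def limp (x y : ℝ) : ℝ := min (1 - x + y) 1
noncomputable def lcon (x y : ℝ) : ℝ := max (x + y - 1) 0
noncomputable def ldis (x y : ℝ) : ℝ := min (x + y) 1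
noncomputable def lpow (x : ℝ) : ℕ → ℝ
  | 0 => 1
  | k+1 => lcon x (lpow x k)

/-- The finite Lukasiewicz chain Ln = {i/n : 0 <= i <= n} as a subset of R. -/
def Luk (n : ℕ) : Set ℝ := {x | ∃ i : ℕ, i ≤ n ∧ x = (i : ℝ) / n}

/-- Value of [a]phi at w: infimum of values at a-successors (empty inf = 1). -/
noncomputable def lbox {W : Type*} (R : W → W → Prop) (v : W → ℝ) (w : W) : ℝ :=
  sInf (insert 1 (v '' {u | R w u}))

/-- Value of <a>phi at w: supremum of values at a-successors (empty sup = 0). -/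
noncomputable def ldia {W : Type*} (R : W → W → Prop) (v : W → ℝ) (w : W) : ℝ :=
  sSup (insert 0 (v '' {u | R w u}))

/-- The finite subsets of [0,1] containing 0,1 and closed under neg and imp
are exactly the sets Ln for integers n >= 1. -/
theorem stmt5 (S : Set ℝ) :
    (S ⊆ Set.Icc (0:ℝ) 1 ∧ S.Finite ∧ (0:ℝ) ∈ S ∧ (1:ℝ) ∈ S ∧
      (∀ x ∈ S, lneg x ∈ S) ∧ (∀ x ∈ S, ∀ y ∈ S, limp x y ∈ S)) ↔
    ∃ n : ℕ, 1 ≤ n ∧ S = Luk n := by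
  constructor
  · rintro ⟨hIcc, hfin, h0, h1, hneg, himp⟩
    -- closure under truncated subtraction
    have hsub : ∀ x ∈ S, ∀ y ∈ S, max (x - y) 0 ∈ S := by
      intro x hx y hy
      have h := hneg _ (himp x hx y hy)
      have heq : lneg (limp x y) = max (x - y) 0 := by
        unfold lneg limp
        rcases le_total (1 - x + y) 1 with h | h
        · rw [min_eq_left h, max_eq_left (show (0:ℝ) ≤ x - y by linarith)]; ring
        · rw [min_eq_right h, max_eq_right (show x - y ≤ (0:ℝ) by linarith)]; norm_num
      rwa [heq] at h
    -- closure under truncated addition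
    have hadd : ∀ x ∈ S, ∀ y ∈ S, min (x + y) 1 ∈ S := by
      intro x hx y hy
      have h := himp _ (hneg x hx) y hy
      unfold lneg limp at h
      have e : 1 - (1 - x) + y = x + y := by ring
      rwa [e] at h
    -- minimal positive element d
    have hne : (S ∩ Set.Ioi (0:ℝ)).Nonempty := ⟨1, h1, by norm_num⟩
    obtain ⟨d, hdmem, hdmin⟩ :=
      Set.exists_min_image (S ∩ Set.Ioi (0:ℝ)) id (hfin.inter_of_left _) hne
    have hdS : d ∈ S := hdmem.1
    have hd0 : 0 < d := hdmem.2
    -- iterated subtraction stays in S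
    have hmul : ∀ x ∈ S, ∀ k : ℕ, max (x - k * d) 0 ∈ S := by
      intro x hx k
      induction k with
      | zero =>
        have e : max (x - (0:ℕ) * d) 0 = x := by
          push_cast
          rw [max_eq_left]
          · ring
          · have := (hIcc hx).1; linarith
        rw [e]; exact hx
      | succ k ih =>
        have key : max (x - ((k+1 : ℕ)) * d) 0 = max (max (x - k * d) 0 - d) 0 := by
          push_cast
          rcases le_total (x - (k:ℝ) * d) 0 with h | h
          · rw [max_eq_right h, max_eq_right (show x - ((k:ℝ)+1)*d ≤ 0 by nlinarith),
              max_eq_right (show (0:ℝ) - d ≤ 0 by linarith)]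
          · rw [max_eq_left h]
            congr 1
            ring
        rw [key]
        exact hsub _ ih d hdS
    -- every element of S is a natural multiple of d
    have hrep : ∀ x ∈ S, ∃ m : ℕ, x = m * d := by
      intro x hx
      have hex : ∃ m : ℕ, x - m * d ≤ 0 := by
        obtain ⟨m, hm⟩ := exists_nat_gt (x / d)
        refine ⟨m, ?_⟩
        have : x / d < m := hm
        rw [div_lt_iff₀ hd0] at this
        linarith
      have hle := Nat.find_spec hex
      rcases h : Nat.find hex with _ | k
      · refine ⟨0, ?_⟩
        rw [h] at hle
        push_cast at hle ⊢
        have := (hIcc hx).1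
        linarith
      · have hklt : k < Nat.find hex := by omega
        have hgt := Nat.find_min hex hklt
        push_neg at hgt
        have hmem : x - k * d ∈ S := by
          have h2 := hmul x hx k
          rwa [max_eq_left (le_of_lt hgt)] at h2
        have hdle : d ≤ x - k * d := hdmin _ ⟨hmem, hgt⟩
        rw [h] at hle
        refine ⟨k + 1, ?_⟩
        push_cast at hle ⊢
        linarith
    -- 1 = n * d
    obtain ⟨n, hn1⟩ := hrep 1 h1
    have hn : 1 ≤ n := by
      by_contra hcon
      interval_cases n
      · simp at hn1
    have hnpos : (0:ℝ) < n := by exact_mod_cast Nat.pos_of_ne_zero (by omega)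
    have hd : d = 1 / n := by field_simp; linarith [hn1]
    refine ⟨n, hn, ?_⟩
    -- truncated multiples of d are in S
    have hmins : ∀ k : ℕ, min (k * d) 1 ∈ S := by
      intro k
      induction k with
      | zero => simpa using h0
      | succ k ih =>
        have key : min (((k+1:ℕ)) * d) 1 = min (min (k * d) 1 + d) 1 := by
          push_cast
          rcases le_total ((k:ℝ) * d) 1 with h | h
          · rw [min_eq_left h]
            congr 1
            ring
          · rw [min_eq_right h, min_eq_right (show (1:ℝ) ≤ ((k:ℝ)+1)*d by nlinarith),
              min_eq_right (show (1:ℝ) ≤ 1 + d by linarith)]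
        rw [key]
        exact hadd _ ih d hdS
    ext x
    constructor
    · intro hx
      obtain ⟨m, hm⟩ := hrep x hx
      have hx1 : x ≤ 1 := (hIcc hx).2
      have hmn : m ≤ n := by
        by_contra hcon
        push_neg at hcon
        have : (n:ℝ) < m := by exact_mod_cast hcon
        nlinarith
      exact ⟨m, hmn, by rw [hm, hd]; ring⟩
    · rintro ⟨i, hi, rfl⟩
      have hi' : (i:ℝ) * d ≤ 1 := by
        have : (i:ℝ) ≤ n := by exact_mod_cast hi
        nlinarith
      have h2 := hmins i
      rw [min_eq_left hi'] at h2
      have e : (i:ℝ) / n = i * d := by rw [hd]; ring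
      rwa [e]
  · rintro ⟨n, hn, rfl⟩
    have hn0 : (n:ℝ) ≠ 0 := Nat.cast_ne_zero.mpr (by omega)
    have hnpos : (0:ℝ) < n := by exact_mod_cast Nat.pos_of_ne_zero (by omega)
    refine ⟨?_, ?_, ⟨0, by omega, by simp⟩, ⟨n, le_refl n, by rw [div_self hn0]⟩, ?_, ?_⟩
    · rintro x ⟨i, hi, rfl⟩
      constructor
      · positivity
      · rw [div_le_one hnpos]; exact_mod_cast hi
    · have : Luk n = (fun i : ℕ => (i:ℝ)/n) '' (Set.Iic n) := by
        ext x
        simp only [Luk, Set.mem_setOf_eq, Set.mem_image, Set.mem_Iic]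
        constructor
        · rintro ⟨i, hi, rfl⟩; exact ⟨i, hi, rfl⟩
        · rintro ⟨i, hi, rfl⟩; exact ⟨i, hi, rfl⟩
      rw [this]
      exact (Set.finite_Iic n).image _
    · rintro x ⟨i, hi, rfl⟩
      refine ⟨n - i, by omega, ?_⟩
      unfold lneg
      rw [Nat.cast_sub hi]
      field_simp
    · rintro x ⟨i, hi, rfl⟩ y ⟨j, hj, rfl⟩
      refine ⟨min (n - i + j) n, min_le_right _ _, ?_⟩
      unfold limp
      rcases le_total (n - i + j) n with h | h
      · rw [min_eq_left h]
        have e : 1 - (i:ℝ)/n + j/n = ((n - i + j : ℕ):ℝ)/n := by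
          rw [Nat.cast_add, Nat.cast_sub hi]
          field_simp
        rw [e, min_eq_left]
        rw [div_le_one hnpos]
        exact_mod_cast h
      · have hij : i ≤ j := by omega
        rw [min_eq_right h, div_self hn0, min_eq_right]
        have : (i:ℝ)/n ≤ j/n := by
          have hij' : (i:ℝ) ≤ j := by exact_mod_cast hij
          gcongr
        linarith
end

section
/- In any (n+1)-valued Kripke model, where R_{α*} is the reflexive-transitive closure of R_α, for every world w and formula p: Val(w, [α*]p) = min(Val(w, p), Val(w, [α][α*]p)). -/
lemma lbox_bdd {W : Type*} (R : W → W → Prop) (v : W → ℝ) (w : W)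
    (h0 : ∀ u, 0 ≤ v u) : ∀ x ∈ insert 1 (v '' {u | R w u}), (0:ℝ) ≤ x := by
  rintro x (rfl | ⟨u, _, rfl⟩)
  · norm_num
  · exact h0 u

lemma lbox_nonneg {W : Type*} (R : W → W → Prop) (v : W → ℝ) (w : W)
    (h0 : ∀ u, 0 ≤ v u) : 0 ≤ lbox R v w :=
  le_csInf ⟨1, Set.mem_insert 1 _⟩ (lbox_bdd R v w h0)

theorem stmt10 {W : Type*} (n : ℕ) (hn : 1 ≤ n) (R : W → W → Prop)
    (v : W → ℝ) (hv : ∀ u, v u ∈ Luk n) (w : W) :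
    lbox (Relation.ReflTransGen R) v w =
      min (v w) (lbox R (lbox (Relation.ReflTransGen R) v) w) := by
  have h0 : ∀ u, 0 ≤ v u := by
    intro u
    obtain ⟨i, _, hi⟩ := hv u
    rw [hi]; positivity
  set f : W → ℝ := lbox (Relation.ReflTransGen R) v with hf
  have hf0 : ∀ u, 0 ≤ f u := fun u => lbox_nonneg _ v u h0
  have hbdd : ∀ (u : W), BddBelow (insert 1 (v '' {x | Relation.ReflTransGen R u x})) :=
    fun u => ⟨0, lbox_bdd _ v u h0⟩
  have hbdd2 : BddBelow (insert 1 (f '' {u | R w u})) :=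
    ⟨0, lbox_bdd _ f w hf0⟩
  apply le_antisymm
  · apply le_min
    · exact csInf_le (hbdd w) (Set.mem_insert_iff.mpr (Or.inr ⟨w, Relation.ReflTransGen.refl, rfl⟩))
    · apply le_csInf ⟨1, Set.mem_insert 1 _⟩
      rintro x (rfl | ⟨u, hu, rfl⟩)
      · exact csInf_le (hbdd w) (Set.mem_insert 1 _)
      · -- f w ≤ f u since the set for u is a subset of that for w
        apply csInf_le_csInf (hbdd w) ⟨1, Set.mem_insert 1 _⟩
        rintro x (rfl | ⟨y, hy, rfl⟩)
        · exact Set.mem_insert 1 _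
        · exact Or.inr ⟨y, Relation.ReflTransGen.head hu hy, rfl⟩
  · apply le_csInf ⟨1, Set.mem_insert 1 _⟩
    rintro x (rfl | ⟨u, hu, rfl⟩)
    · exact le_trans (min_le_right _ _) (csInf_le hbdd2 (Set.mem_insert 1 _))
    · rcases (Relation.ReflTransGen.cases_head hu) with rfl | ⟨z, hz, hzu⟩
      · exact min_le_left _ _
      · refine le_trans (min_le_right _ _) (le_trans (csInf_le hbdd2 (Or.inr ⟨z, hz, rfl⟩)) ?_)
        exact csInf_le (hbdd z) (Or.inr ⟨u, hzu, rfl⟩)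
end

section
/- In any (n+1)-valued Kripke model, the many-valued induction axiom holds: for every world w, program α, and formula p, min(Val(w,p), Val(w, [α*]((p ⇒ [α]p)^n))) ≤ Val(w, [α*]p), where x^n is the n-fold Łukasiewicz strong-conjunction power and ⇒ is the Łukasiewicz implication. -/
lemma luk_nonneg {n : ℕ} {x : ℝ} (h : x ∈ Luk n) : 0 ≤ x := by
  obtain ⟨i, _, rfl⟩ := h; positivity

lemma luk_le_one {n : ℕ} (hn : 1 ≤ n) {x : ℝ} (h : x ∈ Luk n) : x ≤ 1 := by
  obtain ⟨i, hi, rfl⟩ := h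
  have hn0 : (0:ℝ) < n := by exact_mod_cast hn
  rw [div_le_one hn0]
  exact_mod_cast hi

lemma one_mem_luk {n : ℕ} (hn : 1 ≤ n) : (1 : ℝ) ∈ Luk n := by
  refine ⟨n, le_rfl, ?_⟩
  have hn0 : (n : ℝ) ≠ 0 := by positivity
  rw [div_self hn0]

lemma luk_finite (n : ℕ) : (Luk n).Finite := by
  have hsub : Luk n ⊆ (fun i : ℕ => (i : ℝ) / n) '' (Set.Iic n) := by
    rintro x ⟨i, hi, rfl⟩
    exact ⟨i, hi, rfl⟩
  exact ((Set.finite_Iic n).image _).subset hsub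

lemma luk_gap {n : ℕ} (hn : 1 ≤ n) {a b : ℝ} (ha : a ∈ Luk n) (hb : b ∈ Luk n)
    (h : b < a) : 1 ≤ (n : ℝ) * (a - b) := by
  obtain ⟨i, _, rfl⟩ := ha
  obtain ⟨j, _, rfl⟩ := hb
  have hn0 : (0:ℝ) < n := by exact_mod_cast hn
  have hij : (j : ℝ) < i := by
    have hh := (div_lt_div_iff_of_pos_right hn0).mp h
    linarith
  have hij' : j < i := by exact_mod_cast hij
  have h1 : (j : ℝ) + 1 ≤ i := by exact_mod_cast hij'
  have heq : (n : ℝ) * ((i : ℝ) / n - (j : ℝ) / n) = (i : ℝ) - j := by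
    field_simp
  rw [heq]; linarith

lemma lbox_mem {W : Type*} {n : ℕ} (hn : 1 ≤ n) (R : W → W → Prop) {p : W → ℝ}
    (hp : ∀ u, p u ∈ Luk n) (w : W) : lbox R p w ∈ Luk n := by
  have hsub : insert 1 (p '' {u | R w u}) ⊆ Luk n := by
    rintro x hx
    rcases Set.mem_insert_iff.mp hx with rfl | ⟨u, -, rfl⟩
    · exact one_mem_luk hn
    · exact hp u
  have hfin : (insert 1 (p '' {u | R w u})).Finite := (luk_finite n).subset hsub
  have hne : (insert 1 (p '' {u | R w u})).Nonempty := ⟨1, Set.mem_insert _ _⟩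
  exact hsub (hne.csInf_mem hfin)

lemma lpow_nonneg (x : ℝ) : ∀ k, 0 ≤ lpow x k
  | 0 => zero_le_one
  | (k+1) => le_max_right _ _

lemma lpow_le (x : ℝ) (hx : x ≤ 1) : ∀ k, lpow x k ≤ max (1 - k * (1 - x)) 0
  | 0 => by simp [lpow]
  | (k+1) => by
    have ih := lpow_le x hx k
    show lcon x (lpow x k) ≤ _
    unfold lcon
    rcases le_total (1 - (k : ℝ) * (1 - x)) 0 with h | h
    · rw [max_eq_right h] at ih
      refine max_le (le_max_of_le_right ?_) (le_max_right _ _)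
      linarith
    · rw [max_eq_left h] at ih
      refine max_le (le_max_of_le_left ?_) (le_max_right _ _)
      push_cast
      linarith

theorem stmt11 {W : Type*} (n : ℕ) (hn : 1 ≤ n) (R : W → W → Prop)
    (p : W → ℝ) (hp : ∀ u, p u ∈ Luk n) (w : W) :
    min (p w)
        (lbox (Relation.ReflTransGen R) (fun u => lpow (limp (p u) (lbox R p u)) n) w)
      ≤ lbox (Relation.ReflTransGen R) p w := by
  have hpnn : ∀ u, 0 ≤ p u := fun u => luk_nonneg (hp u)
  have hple : ∀ u, p u ≤ 1 := fun u => luk_le_one hn (hp u)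
  set c := lbox (Relation.ReflTransGen R) (fun u => lpow (limp (p u) (lbox R p u)) n) w
    with hc_def
  have key : ∀ u, Relation.ReflTransGen R w u → min (p w) c ≤ p u := by
    intro u h
    induction h with
    | refl => exact min_le_left _ _
    | @tail b b' hb hbb' ih =>
      have hbdd : BddBelow (insert 1 (p '' {u | R b u})) := by
        refine ⟨0, ?_⟩
        rintro x hx
        rcases Set.mem_insert_iff.mp hx with rfl | ⟨v, -, rfl⟩
        · norm_num
        · exact hpnn v
      have hbox_le : lbox R p b ≤ p b' := by
        unfold lbox
        exact csInf_le hbdd (Set.mem_insert_of_mem _ ⟨b', hbb', rfl⟩)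
      have hboxmem : lbox R p b ∈ Luk n := lbox_mem hn R hp b
      by_cases hcase : p b ≤ lbox R p b
      · exact ih.trans (hcase.trans hbox_le)
      · push_neg at hcase
        have hgap : 1 ≤ (n : ℝ) * (p b - lbox R p b) := luk_gap hn (hp b) hboxmem hcase
        have hx : limp (p b) (lbox R p b) = 1 - (p b - lbox R p b) := by
          unfold limp
          rw [min_eq_left (by linarith)]
          ring
        have hxle : limp (p b) (lbox R p b) ≤ 1 := min_le_right _ _
        have h1 := lpow_le _ hxle n
        have h2 : (1 : ℝ) - limp (p b) (lbox R p b) = p b - lbox R p b := by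
          rw [hx]; ring
        rw [h2] at h1
        have h3 : max (1 - (n : ℝ) * (p b - lbox R p b)) 0 = 0 :=
          max_eq_right (by linarith)
        rw [h3] at h1
        have hbddc : BddBelow (insert 1
            ((fun u => lpow (limp (p u) (lbox R p u)) n) '' {u | Relation.ReflTransGen R w u})) := by
          refine ⟨0, ?_⟩
          rintro x hx'
          rcases Set.mem_insert_iff.mp hx' with rfl | ⟨v, -, rfl⟩
          · norm_num
          · exact lpow_nonneg _ _
        have hc_le : c ≤ lpow (limp (p b) (lbox R p b)) n := by
          rw [hc_def]
          unfold lbox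
          exact csInf_le hbddc (Set.mem_insert_of_mem _ ⟨b, hb, rfl⟩)
        have h0box : 0 ≤ lbox R p b := luk_nonneg hboxmem
        have := min_le_right (p w) c
        linarith
  unfold lbox
  refine le_csInf ⟨1, Set.mem_insert _ _⟩ ?_
  rintro y hy
  rcases Set.mem_insert_iff.mp hy with rfl | ⟨u, hu, rfl⟩
  · exact (min_le_left _ _).trans (hple w)
  · exact key u hu
end

section
/- For each i ∈ {1, ..., n} there exists a unary term τ_{i/n} built by composing the operations x ↦ x ⊕ x and x ↦ x ⊙ x (Łukasiewicz doubling operations) such that for all x ∈ Łn = {j/n : 0 ≤ j ≤ n}: τ_{i/n}(x) = 1 if x ≥ i/n and τ_{i/n}(x) = 0 if x < i/n. -/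
noncomputable def ldbl (x : ℝ) : ℝ := min (x + x) 1
noncomputable def lsq (x : ℝ) : ℝ := max (x + x - 1) 0

def istep (n : ℤ) (b : Bool) (r : ℤ) : ℤ := if b then min (2*r) n else max (2*r - n) 0

def ifold (n : ℤ) (L : List Bool) (j : ℤ) : ℤ := L.foldr (istep n) j

lemma ifold_nil (n j : ℤ) : ifold n [] j = j := rfl

lemma ifold_cons (n : ℤ) (b : Bool) (L : List Bool) (j : ℤ) :
    ifold n (b :: L) j = istep n b (ifold n L j) := rfl

lemma ifold_append (n : ℤ) (L : List Bool) (b : Bool) (j : ℤ) :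
    ifold n (L ++ [b]) j = ifold n L (istep n b j) := by
  simp [ifold, List.foldr_append]

lemma ifold_mono (n : ℤ) (L : List Bool) : ∀ j k : ℤ, j ≤ k → ifold n L j ≤ ifold n L k := by
  induction L with
  | nil => intro j k h; exact h
  | cons b L ih =>
    intro j k h
    have := ih j k h
    rw [ifold_cons, ifold_cons]
    cases b <;> simp [istep] <;> omega

lemma ifold_bounds (n : ℤ) (hn : 0 ≤ n) (L : List Bool) :
    ∀ j : ℤ, 0 ≤ j → j ≤ n → 0 ≤ ifold n L j ∧ ifold n L j ≤ n := by
  induction L with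
  | nil => intro j h0 h1; exact ⟨h0, h1⟩
  | cons b L ih =>
    intro j h0 h1
    have := ih j h0 h1
    rw [ifold_cons]
    cases b <;> simp [istep] <;> omega

lemma lemA (n : ℤ) (hn : 1 ≤ n) : ∀ m : ℕ, ∀ a : ℤ, 0 ≤ a → a < n → a.toNat ≤ m →
    ∃ L, ifold n L a = 0 ∧ ifold n L n = n := by
  intro m
  induction m with
  | zero =>
    intro a h0 _ hm
    have : a = 0 := by omega
    exact ⟨[], by simp [ifold_nil, this], by simp [ifold_nil]⟩
  | succ m ih =>
    intro a h0 hn' hm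
    by_cases ha : a = 0
    · exact ⟨[], by simp [ifold_nil, ha], by simp [ifold_nil]⟩
    · obtain ⟨L, h1, h2⟩ := ih (max (2*a - n) 0) (le_max_right _ _) (by omega) (by omega)
      refine ⟨L ++ [false], ?_, ?_⟩
      · rw [ifold_append]
        simpa [istep] using h1
      · rw [ifold_append]
        have h3 : istep n false n = n := by simp [istep]; omega
        rw [h3]; exact h2

lemma lemB (n : ℤ) (hn : 1 ≤ n) : ∀ m : ℕ, ∀ a b : ℤ, 0 ≤ a → a < b → b ≤ n →
    (n - (b - a)).toNat ≤ m → ∃ L, ifold n L a = 0 ∧ ifold n L b = n := by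
  intro m
  induction m with
  | zero =>
    intro a b h0 hab hbn hm
    have ha : a = 0 := by omega
    have hb : b = n := by omega
    exact ⟨[], by simp [ifold_nil, ha], by simp [ifold_nil, hb]⟩
  | succ m ih =>
    intro a b h0 hab hbn hm
    rcases le_or_gt (2*b) n with h1 | h1
    · obtain ⟨L, hA, hB⟩ := ih (2*a) (2*b) (by omega) (by omega) (by omega) (by omega)
      refine ⟨L ++ [true], ?_, ?_⟩
      · rw [ifold_append]
        have : istep n true a = 2*a := by simp [istep]; omega
        rw [this]; exact hA
      · rw [ifold_append]
        have : istep n true b = 2*b := by simp [istep]; omega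
        rw [this]; exact hB
    rcases le_or_gt n (2*a) with h2 | h2
    · obtain ⟨L, hA, hB⟩ := ih (2*a - n) (2*b - n) (by omega) (by omega) (by omega) (by omega)
      refine ⟨L ++ [false], ?_, ?_⟩
      · rw [ifold_append]
        have : istep n false a = 2*a - n := by simp [istep]; omega
        rw [this]; exact hA
      · rw [ifold_append]
        have : istep n false b = 2*b - n := by simp [istep]; omega
        rw [this]; exact hB
    · obtain ⟨L, hA, hB⟩ := lemA n hn (2*a).toNat (2*a) (by omega) (by omega) le_rfl
      refine ⟨L ++ [true], ?_, ?_⟩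
      · rw [ifold_append]
        have : istep n true a = 2*a := by simp [istep]; omega
        rw [this]; exact hA
      · rw [ifold_append]
        have : istep n true b = n := by simp [istep]; omega
        rw [this]; exact hB

lemma bridge (n : ℕ) (hn : 1 ≤ n) (L : List Bool) : ∀ j : ℤ, 0 ≤ j → j ≤ (n:ℤ) →
    L.foldr (fun b r => if b then ldbl r else lsq r) ((j:ℝ)/n)
      = ((ifold n L j : ℤ) : ℝ)/n := by
  have hnR : (0:ℝ) < n := by exact_mod_cast Nat.pos_of_ne_zero (by omega)
  induction L with
  | nil => intro j _ _; simp [ifold_nil]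
  | cons b L ih =>
    intro j h0 hj
    have hb := ifold_bounds n (by positivity) L j h0 hj
    have hIH := ih j h0 hj
    rw [List.foldr_cons, hIH, ifold_cons]
    set m := ifold (n:ℤ) L j with hm
    cases b
    · simp only [if_false, lsq, istep]
      have h1 : ((m:ℝ)/n + (m:ℝ)/n - 1) = ((2*m - n : ℤ):ℝ)/n := by
        push_cast; field_simp; ring
      rw [h1, show (0:ℝ) = ((0:ℤ):ℝ)/n by simp]
      rw [max_div_div_right hnR.le]
      push_cast
      norm_num
    · simp only [if_true, ldbl, istep]
      have h1 : ((m:ℝ)/n + (m:ℝ)/n) = ((2*m : ℤ):ℝ)/n := by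
        push_cast; field_simp; ring
      rw [h1, show (1:ℝ) = (((n:ℤ)):ℝ)/n by field_simp; norm_cast]
      rw [min_div_div_right hnR.le]
      push_cast
      norm_num


theorem stmt15 (n : ℕ) (hn : 1 ≤ n) (i : ℕ) (hi1 : 1 ≤ i) (hin : i ≤ n) :
    ∃ L : List Bool, ∀ x ∈ Luk n,
      ((i : ℝ) / n ≤ x → L.foldr (fun b r => if b then ldbl r else lsq r) x = 1) ∧
      (x < (i : ℝ) / n → L.foldr (fun b r => if b then ldbl r else lsq r) x = 0) := by
  have hnZ : (1:ℤ) ≤ (n:ℤ) := by exact_mod_cast hn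
  have hnR : (0:ℝ) < n := by exact_mod_cast Nat.pos_of_ne_zero (by omega)
  obtain ⟨L, hA, hB⟩ := lemB n hnZ ((n:ℤ) - 1).toNat ((i:ℤ) - 1) (i:ℤ)
    (by omega) (by omega) (by exact_mod_cast hin) (by omega)
  refine ⟨L, ?_⟩
  rintro x ⟨j, hjn, rfl⟩
  have hjZ : (j:ℤ) ≤ (n:ℤ) := by exact_mod_cast hjn
  have hbr := bridge n hn L (j:ℤ) (by positivity) hjZ
  have hcast : ((j:ℤ):ℝ) = (j:ℝ) := by push_cast; ring
  rw [hcast] at hbr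
  constructor
  · intro hge
    have hij : (i:ℤ) ≤ (j:ℤ) := by
      have : (i:ℝ) ≤ (j:ℝ) := by
        have := (div_le_div_iff_of_pos_right hnR).mp hge
        exact this
      exact_mod_cast this
    have h1 : ifold n L (i:ℤ) ≤ ifold n L (j:ℤ) := ifold_mono _ _ _ _ hij
    have h2 := (ifold_bounds n (by omega) L (j:ℤ) (by positivity) hjZ).2
    have h3 : ifold (n:ℤ) L (j:ℤ) = n := by omega
    rw [hbr, h3]
    push_cast
    field_simp
  · intro hlt
    have hij : (j:ℤ) ≤ (i:ℤ) - 1 := by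
      have : (j:ℝ) < (i:ℝ) := by
        have := (div_lt_div_iff_of_pos_right hnR).mp hlt
        exact this
      have : (j:ℤ) < (i:ℤ) := by exact_mod_cast this
      omega
    have h1 : ifold n L (j:ℤ) ≤ ifold n L ((i:ℤ)-1) := ifold_mono _ _ _ _ hij
    have h2 := (ifold_bounds n (by omega) L (j:ℤ) (by positivity) hjZ).1
    have h3 : ifold (n:ℤ) L (j:ℤ) = 0 := by omega
    rw [hbr, h3]
    simp
end

section
/- In any (n+1)-valued non-standard Kripke model M (in particular any standard one), if M ⊨ (φ ⇒ [α]φ)^n (i.e., Val(w, (φ ⇒ [α]φ)^n) = 1 for every world w) then M ⊨ φ ⇒ [α*]φ, where R_{α*} is any reflexive and transitive extension of R_α and M validates the induction axiom (φ ∧ [α*](φ ⇒ [α]φ)^n) ⇒ [α*]φ. -/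
theorem stmt19 {W : Type*} (n : ℕ) (hn : 1 ≤ n) (R Rstar : W → W → Prop)
    (hrefl : ∀ w, Rstar w w)
    (htrans : ∀ u v w, Rstar u v → Rstar v w → Rstar u w)
    (hext : ∀ u v, R u v → Rstar u v)
    (p : W → ℝ) (hp : ∀ w, p w ∈ Luk n)
    (hind : ∀ w, min (p w) (lbox Rstar (fun u => lpow (limp (p u) (lbox R p u)) n) w)
      ≤ lbox Rstar p w)
    (hprem : ∀ w, lpow (limp (p w) (lbox R p w)) n = 1) :
    ∀ w, limp (p w) (lbox Rstar p w) = 1 := by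
  intro w
  have hbox : lbox Rstar (fun u => lpow (limp (p u) (lbox R p u)) n) w = 1 := by
    have : ((fun u => lpow (limp (p u) (lbox R p u)) n) '' {u | Rstar w u}) ⊆ {1} := by
      rintro x ⟨u, _, rfl⟩
      exact hprem u
    have h1 : insert 1 ((fun u => lpow (limp (p u) (lbox R p u)) n) '' {u | Rstar w u}) = {1} := by
      apply Set.Subset.antisymm
      · exact Set.insert_subset_iff.mpr ⟨rfl, this⟩
      · exact Set.singleton_subset_iff.mpr (Set.mem_insert _ _)
    rw [lbox, h1, csInf_singleton]
  have hple : p w ≤ 1 := by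
    obtain ⟨i, hi, heq⟩ := hp w
    rw [heq, div_le_one (by positivity : (0:ℝ) < n)]
    exact_mod_cast hi
  have key : p w ≤ lbox Rstar p w := by
    have := hind w
    rwa [hbox, min_eq_left hple] at this
  rw [limp, min_eq_right]
  linarith
end
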